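/- Let p ∈ [1,2] and q ∈ [2,∞] with 1/p + 1/q = 1, let f : ℝ^d → ℝ be convex with |f(y) − f(x)| ≤ M‖y − x‖_p for all x, y ∈ ℝ^d, and let γ > 0. Then the randomized smoothing f_γ is continuously differentiable and its gradient is (√d · M/γ)-Lipschitz from the p-norm to the q-norm: ‖∇f_γ(y) − ∇f_γ(x)‖_q ≤ (√d · M/γ)‖y − x‖_p for all x, y ∈ ℝ^d. -/

import Mathlib

open MeasureTheory Metric
open scoped ENNReal

/-- Randomized smoothing: `f_γ(x) = E_u[f(x+u)]` with `u` uniform on the closed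
Euclidean ball of radius `γ` centered at the origin. -/
noncomputable def smooth {d : ℕ} (f : EuclideanSpace ℝ (Fin d) → ℝ) (γ : ℝ)
    (x : EuclideanSpace ℝ (Fin d)) : ℝ :=
  ⨍ u in closedBall (0 : EuclideanSpace ℝ (Fin d)) γ, f (x + u)

/-- The `ℓ_p`-norm (for `p : ℝ≥0∞`) of a vector in `ℝ^d`. -/
noncomputable def lpnorm {d : ℕ} (p : ℝ≥0∞) (x : EuclideanSpace ℝ (Fin d)) : ℝ :=
  ‖(WithLp.equiv p (Fin d → ℝ)).symm (WithLp.equiv 2 (Fin d → ℝ) x)‖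

namespace SGL
open Real
open scoped RealInnerProductSpace NNReal

variable {d : ℕ}

lemma lpnorm_nonneg (p : ℝ≥0∞) (z : EuclideanSpace ℝ (Fin d)) : 0 ≤ lpnorm p z := by
  classical
  rcases eq_or_ne p 0 with rfl | hp0
  · simp [lpnorm, PiLp.norm_eq_card]
  rcases eq_or_ne p ∞ with rfl | hpt
  · rw [lpnorm, PiLp.norm_eq_ciSup]
    rcases isEmpty_or_nonempty (Fin d) with h | h
    · simp [Real.iSup_of_isEmpty]
    · exact le_ciSup_of_le (Set.Finite.bddAbove (Set.finite_range _)) (Classical.arbitrary _)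
        (norm_nonneg _)
  · have hpt' : 0 < p.toReal := ENNReal.toReal_pos hp0 hpt
    rw [lpnorm, PiLp.norm_eq_sum hpt']
    positivity

lemma lpnorm_eq_sum {p : ℝ≥0∞} (hp : 0 < p.toReal) (z : EuclideanSpace ℝ (Fin d)) :
    lpnorm p z = (∑ i, |z i| ^ p.toReal) ^ (1 / p.toReal) := by
  rw [lpnorm, PiLp.norm_eq_sum hp]
  simp only [Real.norm_eq_abs]
  rfl

lemma lpnorm_top_eq (z : EuclideanSpace ℝ (Fin d)) :
    lpnorm ∞ z = ⨆ i, |z i| := by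
  rw [lpnorm, PiLp.norm_eq_ciSup]
  simp only [Real.norm_eq_abs]
  rfl

lemma coord_le_norm (z : EuclideanSpace ℝ (Fin d)) (i : Fin d) : |z i| ≤ ‖z‖ := by
  rw [EuclideanSpace.norm_eq, ← Real.sqrt_sq_eq_abs]
  apply Real.sqrt_le_sqrt
  exact Finset.single_le_sum (f := fun j => ‖z j‖ ^ 2) (fun j _ => by positivity)
    (Finset.mem_univ i) |>.trans_eq' (by rw [Real.norm_eq_abs, sq_abs])

lemma coord_le_lpnorm {p : ℝ≥0∞} (hp : 0 < p.toReal) (z : EuclideanSpace ℝ (Fin d)) (i : Fin d) :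
    |z i| ≤ lpnorm p z := by
  rw [lpnorm_eq_sum hp]
  have h1 : |z i| ^ p.toReal ≤ ∑ j, |z j| ^ p.toReal :=
    Finset.single_le_sum (f := fun j => |z j| ^ p.toReal) (fun j _ => by positivity)
      (Finset.mem_univ i)
  calc |z i| = (|z i| ^ p.toReal) ^ (1 / p.toReal) := by
        rw [← Real.rpow_mul (abs_nonneg _), mul_one_div, div_self hp.ne', Real.rpow_one]
    _ ≤ (∑ j, |z j| ^ p.toReal) ^ (1 / p.toReal) :=
        Real.rpow_le_rpow (by positivity) h1 (by positivity)

/-- `ℓ2` norm is at most the `ℓp` norm for `p ≤ 2`. -/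
lemma l2_le_lpnorm {p : ℝ≥0∞} (hp1 : 1 ≤ p) (hp2 : p ≤ 2) (z : EuclideanSpace ℝ (Fin d)) :
    ‖z‖ ≤ lpnorm p z := by
  have hpt : p ≠ ∞ := fun h => by rw [h] at hp2; exact (by norm_num : ¬ (∞:ℝ≥0∞) ≤ 2) hp2
  have hr1 : 1 ≤ p.toReal := by
    rw [← ENNReal.toReal_one]
    exact ENNReal.toReal_mono hpt hp1
  have hr2 : p.toReal ≤ 2 := by
    have := ENNReal.toReal_mono (by norm_num) hp2
    simpa using this
  have hrpos : 0 < p.toReal := lt_of_lt_of_le one_pos hr1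
  set r := p.toReal
  set A := lpnorm p z with hA
  have hA0 : 0 ≤ A := lpnorm_nonneg p z
  have hAr : A ^ r = ∑ i, |z i| ^ r := by
    rw [hA, lpnorm_eq_sum hrpos, ← Real.rpow_mul (by positivity)]
    rw [one_div, inv_mul_cancel₀ hrpos.ne', Real.rpow_one]
  have key : ‖z‖ ^ (2:ℕ) ≤ A ^ (2:ℕ) := by
    have h1 : ‖z‖ ^ (2:ℕ) = ∑ i, |z i| ^ (2:ℕ) := by
      rw [EuclideanSpace.norm_eq, Real.sq_sqrt (by positivity)]
      exact Finset.sum_congr rfl fun i _ => by rw [Real.norm_eq_abs]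
    have h2 : ∀ i : Fin d, |z i| ^ (2:ℕ) ≤ A ^ (2 - r) * |z i| ^ r := by
      intro i
      rcases eq_or_lt_of_le (abs_nonneg (z i)) with h0 | h0
      · rw [← h0, Real.zero_rpow hrpos.ne']
        simp
      · have hle : |z i| ≤ A := coord_le_lpnorm hrpos z i
        have e1 : |z i| ^ (2:ℕ) = |z i| ^ (2 - r) * |z i| ^ r := by
          rw [← Real.rpow_add h0, sub_add_cancel, ← Real.rpow_natCast |z i| 2]
          norm_num
        rw [e1]
        apply mul_le_mul_of_nonneg_right _ (by positivity)
        exact Real.rpow_le_rpow (abs_nonneg _) hle (by linarith)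
    have h3 : A ^ (2 - r) * A ^ r = A ^ (2:ℕ) := by
      rcases eq_or_lt_of_le hA0 with h0 | h0
      · rw [← h0, Real.zero_rpow hrpos.ne']
        simp
      · rw [← Real.rpow_add h0, sub_add_cancel, ← Real.rpow_natCast A 2]
        norm_num
    calc ‖z‖ ^ (2:ℕ) = ∑ i, |z i| ^ (2:ℕ) := h1
      _ ≤ ∑ i, A ^ (2 - r) * |z i| ^ r := Finset.sum_le_sum fun i _ => h2 i
      _ = A ^ (2 - r) * (A ^ r) := by rw [← Finset.mul_sum, hAr]
      _ = A ^ (2:ℕ) := h3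
  calc ‖z‖ = Real.sqrt (‖z‖ ^ 2) := (Real.sqrt_sq (norm_nonneg _)).symm
    _ ≤ Real.sqrt (A ^ 2) := Real.sqrt_le_sqrt key
    _ = A := Real.sqrt_sq hA0


lemma lpnorm_smul {p : ℝ≥0∞} (hp : 1 ≤ p) (c : ℝ) (z : EuclideanSpace ℝ (Fin d)) :
    lpnorm p (c • z) = |c| * lpnorm p z := by
  haveI : Fact (1 ≤ p) := ⟨hp⟩
  have : (WithLp.equiv p (Fin d → ℝ)).symm (WithLp.equiv 2 (Fin d → ℝ) (c • z))
      = c • (WithLp.equiv p (Fin d → ℝ)).symm (WithLp.equiv 2 (Fin d → ℝ) z) := by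
    ext i
    simp [WithLp.equiv_symm_apply]
  rw [lpnorm, this, norm_smul, Real.norm_eq_abs, lpnorm]

lemma lpnorm_single {p : ℝ≥0∞} (hp : 1 ≤ p) (i : Fin d) (a : ℝ) :
    lpnorm p (EuclideanSpace.single i a) = |a| := by
  classical
  haveI : Fact (1 ≤ p) := ⟨hp⟩
  have : (WithLp.equiv p (Fin d → ℝ)).symm (WithLp.equiv 2 (Fin d → ℝ)
      (EuclideanSpace.single i a)) = (WithLp.equiv p (Fin d → ℝ)).symm (Pi.single i a) := by
    ext j
    simp [WithLp.equiv_symm_apply, EuclideanSpace.single_apply,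
      Pi.single_apply]
  rw [lpnorm, this, WithLp.equiv_symm_apply, PiLp.norm_toLp_single, Real.norm_eq_abs]

/-- Crude bound: `ℓp` norm is at most `d` times the Euclidean norm. -/
lemma lpnorm_le_card_mul_norm {p : ℝ≥0∞} (hp : 1 ≤ p) (z : EuclideanSpace ℝ (Fin d)) :
    lpnorm p z ≤ d * ‖z‖ := by
  classical
  haveI : Fact (1 ≤ p) := ⟨hp⟩
  have hz : (WithLp.equiv p (Fin d → ℝ)).symm (WithLp.equiv 2 (Fin d → ℝ) z)
      = ∑ i, (WithLp.equiv p (Fin d → ℝ)).symm (Pi.single i (z i)) := by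
    have e1 : ∀ y : Fin d → ℝ, (WithLp.equiv p (Fin d → ℝ)).symm y
        = (WithLp.linearEquiv p ℝ (Fin d → ℝ)).symm y := fun _ => rfl
    rw [e1]
    have : (∑ i, (WithLp.equiv p (Fin d → ℝ)).symm (Pi.single i (z i)))
        = ∑ i, (WithLp.linearEquiv p ℝ (Fin d → ℝ)).symm (Pi.single i (z i)) := by
      refine Finset.sum_congr rfl fun i _ => e1 _
    rw [this, ← map_sum]
    congr 1
    exact (Finset.univ_sum_single _).symm
  have coordb : ∀ i : Fin d, |z i| ≤ ‖z‖ := by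
    intro i
    rw [EuclideanSpace.norm_eq, ← Real.sqrt_sq_eq_abs]
    apply Real.sqrt_le_sqrt
    exact Finset.single_le_sum (f := fun j => ‖z j‖ ^ 2) (fun j _ => by positivity)
        (Finset.mem_univ i) |>.trans_eq' (by rw [Real.norm_eq_abs, sq_abs])
  calc lpnorm p z = ‖∑ i, (WithLp.equiv p (Fin d → ℝ)).symm (Pi.single i (z i))‖ := by
        rw [lpnorm, hz]
    _ ≤ ∑ i : Fin d, ‖(WithLp.equiv p (Fin d → ℝ)).symm (Pi.single i (z i))‖ :=
        norm_sum_le _ _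
    _ = ∑ i : Fin d, |z i| := by
        refine Finset.sum_congr rfl fun i _ => ?_
        rw [WithLp.equiv_symm_apply, PiLp.norm_toLp_single, Real.norm_eq_abs]
    _ ≤ ∑ _i : Fin d, ‖z‖ := Finset.sum_le_sum fun i _ => coordb i
    _ = d * ‖z‖ := by simp [Finset.sum_const, nsmul_eq_mul]


/-- Duality: if `⟪z,v⟫ ≤ K‖v‖_p` for all `v`, then `‖z‖_q ≤ K`. -/
lemma dual_bound {p q : ℝ≥0∞} (hp1 : 1 ≤ p) (hp2 : p ≤ 2) (hq : 2 ≤ q)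
    (hpq : 1 / p + 1 / q = 1) {z : EuclideanSpace ℝ (Fin d)} {K : ℝ} (hK : 0 ≤ K)
    (h : ∀ v : EuclideanSpace ℝ (Fin d), |⟪z, v⟫| ≤ K * lpnorm p v) :
    lpnorm q z ≤ K := by
  classical
  have hcoord : ∀ i : Fin d, |z i| ≤ K := by
    intro i
    have h1 := h (EuclideanSpace.single i 1)
    rw [lpnorm_single hp1, abs_one, mul_one] at h1
    rw [EuclideanSpace.inner_single_right] at h1
    simpa using h1
  rcases eq_or_ne q ∞ with rfl | hqt
  · rw [lpnorm_top_eq]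
    rcases isEmpty_or_nonempty (Fin d) with hd | hd
    · simpa [Real.iSup_of_isEmpty] using hK
    · exact ciSup_le fun i => hcoord i
  -- finite q case
  have hq1 : 1 ≤ q := le_trans (by norm_num) hq
  have hq0 : q ≠ 0 := fun h0 => by rw [h0] at hq1; exact (by norm_num : ¬ (1:ℝ≥0∞) ≤ 0) hq1
  have hqr2 : 2 ≤ q.toReal := by
    have := ENNReal.toReal_mono hqt hq
    simpa using this
  have hqr0 : 0 < q.toReal := by linarith
  have hpt : p ≠ ∞ := fun h0 => by rw [h0] at hp2; exact (by norm_num : ¬ (∞:ℝ≥0∞) ≤ 2) hp2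
  have hp0 : p ≠ 0 := fun h0 => by rw [h0] at hp1; exact (by norm_num : ¬ (1:ℝ≥0∞) ≤ 0) hp1
  have hsum : p.toReal⁻¹ + q.toReal⁻¹ = 1 := by
    have : (1/p + 1/q).toReal = 1 := by rw [hpq]; simp
    rwa [ENNReal.toReal_add (by simp [hp0]) (by simp [hq0]), one_div, one_div,
      ENNReal.toReal_inv, ENNReal.toReal_inv] at this
  have hpr0 : 0 < p.toReal := by
    by_contra hc
    push_neg at hc
    have : p.toReal = 0 := le_antisymm hc ENNReal.toReal_nonneg
    rw [this] at hsum
    simp at hsum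
    have : q.toReal⁻¹ ≤ 1/2 := by
      rw [inv_le_comm₀ hqr0 (by norm_num)] ; linarith
    linarith [hsum]
  set qr := q.toReal
  set pr := p.toReal
  have hconj : (qr - 1) * pr = qr := by
    have hq1' : qr ≠ 0 := hqr0.ne'
    have hp1' : pr ≠ 0 := hpr0.ne'
    field_simp at hsum
    -- hsum : qr + pr = pr * qr  (in some order)
    nlinarith [hsum]
  rcases eq_or_ne z 0 with rfl | hz
  · have : lpnorm q (0 : EuclideanSpace ℝ (Fin d)) = 0 := by
      rw [lpnorm_eq_sum hqr0]
      simp only [show ∀ i : Fin d, (0 : EuclideanSpace ℝ (Fin d)) i = 0 from fun _ => rfl,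
        abs_zero, Real.zero_rpow hqr0.ne', Finset.sum_const_zero]
      have hq' : q.toReal ≠ 0 := hqr0.ne'
      simp [Real.zero_rpow hq', Real.zero_rpow (one_div_ne_zero hq'), Real.zero_rpow (inv_ne_zero hq')]
    rw [this]; exact hK
  -- main case
  set S := ∑ i, |z i| ^ qr with hS
  have hSnonneg : 0 ≤ S := Finset.sum_nonneg fun i _ => by positivity
  have hSpos : 0 < S := by
    have h' : ∃ i, z i ≠ 0 := by
      by_contra hc
      push_neg at hc
      exact hz (PiLp.ext fun i => hc i)
    obtain ⟨i, hi⟩ := h'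
    have : 0 < |z i| ^ qr := Real.rpow_pos_of_pos (abs_pos.mpr hi) _
    exact lt_of_lt_of_le this (Finset.single_le_sum (f := fun j => |z j| ^ qr)
      (fun j _ => by positivity) (Finset.mem_univ i))
  set v : EuclideanSpace ℝ (Fin d) := WithLp.toLp 2 (fun i => |z i| ^ (qr - 2) * z i) with hv
  have hzi_v : ∀ i, z i * v i = |z i| ^ qr := by
    intro i
    rcases eq_or_ne (z i) 0 with h0 | h0
    · simp only [hv, PiLp.toLp_apply]
      rw [h0]
      simp [Real.zero_rpow hqr0.ne']
    · have habs : 0 < |z i| := abs_pos.mpr h0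
      calc z i * v i = |z i| ^ (qr-2) * (z i * z i) := by simp only [hv, PiLp.toLp_apply]; ring
        _ = |z i| ^ (qr-2) * |z i| ^ (2:ℝ) := by
            rw [← abs_mul_abs_self (z i)]
            congr 1
            rw [show (2:ℝ) = ((2:ℕ):ℝ) by norm_num, Real.rpow_natCast, pow_two]
        _ = |z i| ^ qr := by rw [← Real.rpow_add habs]; ring_nf
  have habs_v : ∀ i, |v i| = |z i| ^ (qr - 1) := by
    intro i
    rcases eq_or_ne (z i) 0 with h0 | h0
    · simp only [hv, PiLp.toLp_apply]
      rw [h0]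
      simp only [mul_zero, abs_zero]
      rw [Real.zero_rpow (by intro hc; linarith : qr - 1 ≠ 0)]
    · have habs : 0 < |z i| := abs_pos.mpr h0
      simp only [hv, PiLp.toLp_apply]
      rw [abs_mul, abs_of_nonneg (Real.rpow_nonneg (abs_nonneg _) _)]
      rw [show |z i| ^ (qr-2) * |z i| = |z i| ^ (qr-2) * |z i| ^ (1:ℝ) by rw [Real.rpow_one]]
      rw [← Real.rpow_add habs]
      ring_nf
  have hinner : ⟪z, v⟫ = S := by
    rw [hS, PiLp.inner_apply]
    refine Finset.sum_congr rfl fun i _ => ?_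
    simpa [mul_comm] using hzi_v i
  have hlp : lpnorm p v = S ^ (1/pr) := by
    rw [lpnorm_eq_sum hpr0, hS]
    congr 1
    refine Finset.sum_congr rfl fun i _ => ?_
    rw [habs_v i, ← Real.rpow_mul (abs_nonneg _), hconj]
  have hfin := h v
  rw [hinner, hlp, abs_of_nonneg hSnonneg] at hfin
  have hSsplit : S = S ^ (1/pr) * S ^ (1/qr) := by
    rw [← Real.rpow_add hSpos]
    have : 1/pr + 1/qr = 1 := by rw [one_div, one_div]; exact hsum
    rw [this, Real.rpow_one]
  have hpow_pos : 0 < S ^ (1/pr) := Real.rpow_pos_of_pos hSpos _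
  have hfinal : S ^ (1/qr) ≤ K := by
    have h2 : S ^ (1/pr) * S ^ (1/qr) ≤ S ^ (1/pr) * K :=
      calc S ^ (1/pr) * S ^ (1/qr) = S := hSsplit.symm
        _ ≤ K * S ^ (1/pr) := hfin
        _ = S ^ (1/pr) * K := mul_comm _ _
    exact le_of_mul_le_mul_left h2 hpow_pos
  rw [lpnorm_eq_sum hqr0]
  exact hfinal


lemma gamma_ineq (n : ℕ) (hn : 1 ≤ n) :
    2 * Real.Gamma (n/2 + 1) ≤ Real.sqrt n * Real.sqrt π * Real.Gamma ((n+1)/2) := by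
  rcases eq_or_lt_of_le hn with h1 | h2
  · -- n = 1
    rw [← h1]
    push_cast
    rw [show (1:ℝ)/2 + 1 = 1/2 + 1 by ring]
    rw [Real.Gamma_add_one (by norm_num : (1:ℝ)/2 ≠ 0), Real.Gamma_one_half_eq]
    rw [show ((1:ℝ)+1)/2 = 1 by ring, Real.Gamma_one]
    rw [Real.sqrt_one]
    ring_nf
    exact le_refl _
  · -- n ≥ 2
    have hn2 : (2:ℝ) ≤ n := by exact_mod_cast h2
    set a : ℝ := ((n:ℝ)+1)/2 with ha
    have ha0 : 0 < a := by rw [ha]; positivity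
    have ha1 : 0 < a + 1 := by linarith
    have hmid : (1/2 : ℝ) • a + (1/2 : ℝ) • (a+1) = (n:ℝ)/2 + 1 := by
      simp only [smul_eq_mul]; rw [ha]; ring
    have hconv := Real.convexOn_log_Gamma.2 (Set.mem_Ioi.mpr ha0) (Set.mem_Ioi.mpr ha1)
      (by norm_num : (0:ℝ) ≤ 1/2) (by norm_num : (0:ℝ) ≤ 1/2) (by norm_num)
    rw [hmid] at hconv
    simp only [Function.comp_apply, smul_eq_mul] at hconv
    have hΓm : 0 < Real.Gamma ((n:ℝ)/2 + 1) := Real.Gamma_pos_of_pos (by positivity)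
    have hΓa : 0 < Real.Gamma a := Real.Gamma_pos_of_pos ha0
    have hΓa1 : 0 < Real.Gamma (a+1) := Real.Gamma_pos_of_pos ha1
    have hsq : Real.Gamma ((n:ℝ)/2+1) ^ 2 ≤ Real.Gamma a * Real.Gamma (a+1) := by
      have h2' : Real.log (Real.Gamma ((n:ℝ)/2+1) ^ 2)
          ≤ Real.log (Real.Gamma a * Real.Gamma (a+1)) := by
        rw [Real.log_mul hΓa.ne' hΓa1.ne', Real.log_pow]
        push_cast
        linarith
      exact (Real.log_le_log_iff (pow_pos hΓm 2) (mul_pos hΓa hΓa1)).mp h2'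
    have hG1 : Real.Gamma (a+1) = a * Real.Gamma a := Real.Gamma_add_one ha0.ne'
    have hsqrt : Real.Gamma ((n:ℝ)/2+1) ≤ Real.sqrt a * Real.Gamma a := by
      have : Real.Gamma a * Real.Gamma (a+1) = a * Real.Gamma a ^ 2 := by rw [hG1]; ring
      rw [this] at hsq
      calc Real.Gamma ((n:ℝ)/2+1) = Real.sqrt (Real.Gamma ((n:ℝ)/2+1) ^ 2) :=
            (Real.sqrt_sq hΓm.le).symm
        _ ≤ Real.sqrt (a * Real.Gamma a ^ 2) := Real.sqrt_le_sqrt hsq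
        _ = Real.sqrt a * Real.Gamma a := by
            rw [Real.sqrt_mul ha0.le, Real.sqrt_sq hΓa.le]
    have hkey : 2 * Real.sqrt a ≤ Real.sqrt n * Real.sqrt π := by
      have h4a : 4 * a ≤ (n:ℝ) * π := by
        rw [ha]
        have hpi : (3.14159:ℝ) ≤ π := by linarith [Real.pi_gt_d6]
        nlinarith
      calc 2 * Real.sqrt a = Real.sqrt (4 * a) := by
            rw [Real.sqrt_mul (by norm_num : (0:ℝ) ≤ 4), show (4:ℝ) = 2^2 by norm_num,
              Real.sqrt_sq (by norm_num : (0:ℝ) ≤ 2)]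
        _ ≤ Real.sqrt ((n:ℝ) * π) := Real.sqrt_le_sqrt h4a
        _ = Real.sqrt n * Real.sqrt π := Real.sqrt_mul (Nat.cast_nonneg n) π
    calc 2 * Real.Gamma ((n:ℝ)/2 + 1) ≤ 2 * (Real.sqrt a * Real.Gamma a) := by linarith
      _ = (2 * Real.sqrt a) * Real.Gamma a := by ring
      _ ≤ (Real.sqrt n * Real.sqrt π) * Real.Gamma a :=
          mul_le_mul_of_nonneg_right hkey hΓa.le
      _ = Real.sqrt n * Real.sqrt π * Real.Gamma (((n:ℝ)+1)/2) := by rw [ha]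


lemma vol_ball_ratio {d : ℕ} (hd : 1 ≤ d) {γ : ℝ} (hγ : 0 < γ) :
    ENNReal.ofReal (γ^(d-1) * (Real.sqrt π ^ (d-1) / Real.Gamma (((d:ℝ)-1)/2+1)))
      ≤ ENNReal.ofReal (Real.sqrt d / (2*γ)) *
        volume (closedBall (0 : EuclideanSpace ℝ (Fin d)) γ) := by
  haveI : Nonempty (Fin d) := ⟨⟨0, hd⟩⟩
  rw [EuclideanSpace.volume_closedBall]
  simp only [Fintype.card_fin]
  rw [← ENNReal.ofReal_pow hγ.le, ← ENNReal.ofReal_mul (by positivity),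
    ← ENNReal.ofReal_mul (by positivity)]
  apply ENNReal.ofReal_le_ofReal
  -- real inequality
  set e : ℕ := d - 1 with he
  have hde : d = e + 1 := by omega
  have hd1 : (1:ℝ) ≤ (d:ℝ) := by exact_mod_cast hd
  have hΓe : 0 < Real.Gamma (((d:ℝ)-1)/2+1) := Real.Gamma_pos_of_pos (by linarith)
  have hΓd : 0 < Real.Gamma ((d:ℝ)/2+1) := Real.Gamma_pos_of_pos (by positivity)
  have hcast : ((d:ℝ) - 1)/2 + 1 = ((d:ℝ)+1)/2 := by ring
  have hkey : 2 * Real.Gamma ((d:ℝ)/2+1) ≤ Real.sqrt d * Real.sqrt π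
      * Real.Gamma (((d:ℝ)-1)/2+1) := by
    rw [hcast]
    exact gamma_ineq d hd
  have hγd : γ ^ d = γ ^ e * γ := by rw [hde, pow_succ]
  have hπd : Real.sqrt π ^ d = Real.sqrt π ^ e * Real.sqrt π := by rw [hde, pow_succ]
  rw [hγd, hπd]
  have hsd : 0 < Real.sqrt d := Real.sqrt_pos.mpr (by positivity)
  have hsπ : 0 < Real.sqrt π := Real.sqrt_pos.mpr Real.pi_pos
  have hγe : (0:ℝ) < γ ^ e := by positivity
  have hπe : (0:ℝ) < Real.sqrt π ^ e := by positivity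
  have hfrac : γ^e * (Real.sqrt π ^e / Real.Gamma (((d:ℝ)-1)/2+1))
      = (γ^e * Real.sqrt π^e) / Real.Gamma (((d:ℝ)-1)/2+1) := by ring
  have hfrac2 : Real.sqrt d/(2*γ) * (γ^e*γ*(Real.sqrt π^e*Real.sqrt π/Real.Gamma ((d:ℝ)/2+1)))
      = (Real.sqrt d*γ^e*γ*Real.sqrt π^e*Real.sqrt π)/(2*γ*Real.Gamma ((d:ℝ)/2+1)) := by
    field_simp
  rw [hfrac, hfrac2, div_le_div_iff₀ hΓe (by positivity)]
  nlinarith [mul_le_mul_of_nonneg_left hkey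
    (le_of_lt (by positivity : (0:ℝ) < γ^e * Real.sqrt π^e * γ))]


lemma vol_euc_ball_le (ι : Type) [Fintype ι] {γ : ℝ} (hγ : 0 < γ) :
    volume (closedBall (0 : EuclideanSpace ℝ ι) γ)
      ≤ ENNReal.ofReal (γ ^ (Fintype.card ι) *
          (Real.sqrt π ^ (Fintype.card ι) / Real.Gamma ((Fintype.card ι : ℝ)/2+1))) := by
  rcases isEmpty_or_nonempty ι with h | h
  · have hcard : Fintype.card ι = 0 := Fintype.card_eq_zero
    rw [hcard]
    simp only [pow_zero, one_mul]
    rw [show ((0:ℕ):ℝ)/2 + 1 = 1 by norm_num, Real.Gamma_one, div_one, ENNReal.ofReal_one]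
    rw [volume_euclideanSpace_eq_dirac]
    exact measure_mono (Set.subset_univ _) |>.trans_eq (by simp)
  · rw [EuclideanSpace.volume_closedBall]
    rw [← ENNReal.ofReal_pow hγ.le, ← ENNReal.ofReal_mul (by positivity)]

lemma slab_vol {d : ℕ} (hd : 1 ≤ d) (i0 : Fin d) {γ s : ℝ} (hγ : 0 < γ) (hs : 0 ≤ s) :
    volume {z : EuclideanSpace ℝ (Fin d) | ‖z‖ ≤ γ ∧ |z i0| ≤ s}
      ≤ ENNReal.ofReal (2*s) *
        ENNReal.ofReal (γ^(d-1) * (Real.sqrt π ^ (d-1) / Real.Gamma (((d:ℝ)-1)/2+1))) := by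
  set p : Fin d → Prop := fun i => (i : ℕ) = (i0 : ℕ) with hp
  set A : Set (EuclideanSpace ℝ (Fin d)) := {z | ‖z‖ ≤ γ ∧ |z i0| ≤ s} with hA
  have hAmeas : MeasurableSet A := by
    apply MeasurableSet.inter
    · exact (isClosed_le continuous_norm continuous_const).measurableSet
    · have hcont : Continuous fun z : EuclideanSpace ℝ (Fin d) => z i0 :=
        (continuous_apply i0).comp (PiLp.continuousLinearEquiv 2 ℝ _).continuous
      exact (isClosed_le hcont.abs continuous_const).measurableSet
  have hstep1 : volume A =
      volume ((MeasurableEquiv.toLp 2 (Fin d → ℝ)).symm.symm ⁻¹' A) :=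
    ((MeasurePreserving.symm _
      (EuclideanSpace.volume_preserving_symm_measurableEquiv_toLp (Fin d))).measure_preimage
      hAmeas.nullMeasurableSet).symm
  set A1 : Set ({i : Fin d // p i} → ℝ) := Set.pi Set.univ (fun _ => Set.Icc (-s) s) with hA1
  set C1 : Set ({i : Fin d // ¬ p i} → ℝ) := {c | ∑ j, (c j)^2 ≤ γ^2} with hC1
  have hA1meas : MeasurableSet A1 := MeasurableSet.univ_pi fun _ => measurableSet_Icc
  have hC1meas : MeasurableSet C1 := by
    have : Continuous fun c : {i : Fin d // ¬ p i} → ℝ => ∑ j, (c j)^2 :=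
      continuous_finset_sum _ fun j _ => ((continuous_apply j).pow 2)
    exact (isClosed_le this continuous_const).measurableSet
  set φ := MeasurableEquiv.piEquivPiSubtypeProd (fun _ : Fin d => ℝ) p with hφ
  have hsub : (MeasurableEquiv.toLp 2 (Fin d → ℝ)).symm.symm ⁻¹' A ⊆ φ ⁻¹' (A1 ×ˢ C1) := by
    intro y hy
    simp only [Set.mem_preimage, hA, Set.mem_setOf_eq] at hy
    obtain ⟨hy1, hy2⟩ := hy
    have hsum : ∑ i, (y i)^2 ≤ γ^2 := by
      rw [EuclideanSpace.norm_eq] at hy1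
      have h0 : (0:ℝ) ≤ ∑ i, ‖((MeasurableEquiv.toLp 2 (Fin d → ℝ)).symm.symm y) i‖^2 :=
        Finset.sum_nonneg fun i _ => by positivity
      have hsq : ∑ i, ‖((MeasurableEquiv.toLp 2 (Fin d → ℝ)).symm.symm y) i‖^2 ≤ γ^2 := by
        nlinarith [Real.sq_sqrt h0,
          Real.sqrt_nonneg (∑ i, ‖((MeasurableEquiv.toLp 2 (Fin d → ℝ)).symm.symm y) i‖^2)]
      calc ∑ i, (y i)^2 = ∑ i, ‖((MeasurableEquiv.toLp 2 (Fin d → ℝ)).symm.symm y) i‖^2 := by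
            refine Finset.sum_congr rfl fun i _ => ?_
            rw [Real.norm_eq_abs, sq_abs]
            rfl
        _ ≤ γ^2 := hsq
    constructor
    · show (fun j : {i : Fin d // p i} => y (j : Fin d)) ∈ A1
      intro j _
      have hj : (j : Fin d) = i0 := Fin.ext j.2
      show y (j : Fin d) ∈ Set.Icc (-s) s
      rw [hj, Set.mem_Icc, ← abs_le]
      exact hy2
    · show ∑ j : {i : Fin d // ¬ p i}, (y (j:Fin d))^2 ≤ γ^2
      have hsub2 : ∑ j : {i : Fin d // ¬ p i}, (y (j:Fin d))^2
          = ∑ i ∈ Finset.univ.filter (fun i => ¬ p i), (y i)^2 :=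
        (Finset.sum_subtype (p := fun i => ¬ p i) (Finset.univ.filter (fun i => ¬ p i))
          (fun x => by simp) (fun i => (y i)^2)).symm
      rw [hsub2]
      calc ∑ i ∈ Finset.univ.filter (fun i => ¬ p i), (y i)^2
          ≤ ∑ i, (y i)^2 := Finset.sum_le_sum_of_subset_of_nonneg
            (Finset.filter_subset _ _) (fun i _ _ => by positivity)
        _ ≤ γ^2 := hsum
  have hstep2 : volume ((MeasurableEquiv.toLp 2 (Fin d → ℝ)).symm.symm ⁻¹' A)
      ≤ volume A1 * volume C1 := by
    calc volume ((MeasurableEquiv.toLp 2 (Fin d → ℝ)).symm.symm ⁻¹' A)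
        ≤ volume (φ ⁻¹' (A1 ×ˢ C1)) := measure_mono hsub
      _ = volume (A1 ×ˢ C1) := (MeasureTheory.volume_preserving_piEquivPiSubtypeProd
            (fun _ : Fin d => ℝ) p).measure_preimage ((hA1meas.prod hC1meas).nullMeasurableSet)
      _ = volume A1 * volume C1 := by
          rw [MeasureTheory.Measure.volume_eq_prod, Measure.prod_prod]
  -- volume of A1
  haveI huniq : Unique {i : Fin d // p i} := ⟨⟨⟨i0, rfl⟩⟩, fun j => Subtype.ext (Fin.ext j.2)⟩
  have hvolA1 : volume A1 = ENNReal.ofReal (2*s) := by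
    rw [hA1, volume_pi_pi]
    rw [Real.volume_Icc, show s - -s = 2*s by ring]
    rw [Finset.prod_const]
    rw [Finset.card_univ, Fintype.card_unique, pow_one]
  -- volume of C1
  have hcard : Fintype.card {i : Fin d // ¬ p i} = d - 1 := by
    have h1 : Fintype.card {i : Fin d // p i} = 1 := Fintype.card_unique
    have := Fintype.card_subtype_compl p
    rw [h1, Fintype.card_fin] at this
    exact this
  have hvolC1 : volume C1
      ≤ ENNReal.ofReal (γ^(d-1) * (Real.sqrt π ^ (d-1) / Real.Gamma (((d:ℝ)-1)/2+1))) := by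
    have hpre : volume ((MeasurableEquiv.toLp 2 ({i : Fin d // ¬ p i} → ℝ)).symm ⁻¹' C1)
        = volume C1 :=
      (EuclideanSpace.volume_preserving_symm_measurableEquiv_toLp _).measure_preimage
        hC1meas.nullMeasurableSet
    have hball : (MeasurableEquiv.toLp 2 ({i : Fin d // ¬ p i} → ℝ)).symm ⁻¹' C1
        = closedBall (0 : EuclideanSpace ℝ {i : Fin d // ¬ p i}) γ := by
      ext z
      simp only [Set.mem_preimage, hC1, Set.mem_setOf_eq, mem_closedBall, dist_zero_right]
      have hze : ∀ j, (MeasurableEquiv.toLp 2 ({i : Fin d // ¬ p i} → ℝ)).symm z j = z j :=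
        fun j => rfl
      constructor
      · intro h
        rw [EuclideanSpace.norm_eq]
        have : ∑ j, ‖z j‖^2 ≤ γ^2 := by
          refine le_trans (le_of_eq ?_) h
          exact Finset.sum_congr rfl fun j _ => by rw [Real.norm_eq_abs, sq_abs, hze]
        calc Real.sqrt (∑ j, ‖z j‖^2) ≤ Real.sqrt (γ^2) := Real.sqrt_le_sqrt this
          _ = γ := Real.sqrt_sq hγ.le
      · intro h
        rw [EuclideanSpace.norm_eq] at h
        have h0 : (0:ℝ) ≤ ∑ j, ‖z j‖^2 := Finset.sum_nonneg fun j _ => by positivity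
        have : ∑ j, ‖z j‖^2 ≤ γ^2 := by
          nlinarith [Real.sq_sqrt h0, Real.sqrt_nonneg (∑ j, ‖z j‖^2)]
        refine le_trans (le_of_eq ?_) this
        exact Finset.sum_congr rfl fun j _ => by rw [Real.norm_eq_abs, sq_abs, hze]
    have := vol_euc_ball_le {i : Fin d // ¬ p i} hγ
    rw [hcard] at this
    rw [← hpre, hball]
    refine le_trans this (le_of_eq ?_)
    congr 2
    rw [Nat.cast_sub hd, Nat.cast_one]
  calc volume A ≤ volume A1 * volume C1 := by rw [hstep1]; exact hstep2
    _ ≤ ENNReal.ofReal (2*s) *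
        ENNReal.ofReal (γ^(d-1) * (Real.sqrt π ^ (d-1) / Real.Gamma (((d:ℝ)-1)/2+1))) := by
        rw [hvolA1]
        exact mul_le_mul_right hvolC1 _


lemma diff_vol {d : ℕ} (hd : 1 ≤ d) {γ : ℝ} (hγ : 0 < γ) (v : EuclideanSpace ℝ (Fin d)) :
    volume (closedBall (0 : EuclideanSpace ℝ (Fin d)) γ \ closedBall v γ)
      ≤ ENNReal.ofReal (Real.sqrt d * ‖v‖ / (2*γ)) *
        volume (closedBall (0 : EuclideanSpace ℝ (Fin d)) γ) := by
  rcases eq_or_ne v 0 with rfl | hv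
  · simp
  set B : Set (EuclideanSpace ℝ (Fin d)) := closedBall 0 γ with hB
  set t : ℝ := ‖v‖ with ht
  have htpos : 0 < t := norm_pos_iff.mpr hv
  set c : ℝ := t^2/2 with hc
  set e : EuclideanSpace ℝ (Fin d) := t⁻¹ • v with he
  have hnorme : ‖e‖ = 1 := by
    rw [he, norm_smul, Real.norm_eq_abs, abs_of_pos (inv_pos.mpr htpos), ← ht,
      inv_mul_cancel₀ htpos.ne']
  set P : Set (EuclideanSpace ℝ (Fin d)) := B ∩ {u | c ≤ ⟪u, v⟫} with hP
  set Q0 : Set (EuclideanSpace ℝ (Fin d)) := B ∩ {u | ⟪u, v⟫ < -c} with hQ0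
  set SL : Set (EuclideanSpace ℝ (Fin d)) := B ∩ {u | -c ≤ ⟪u, v⟫ ∧ ⟪u, v⟫ < c} with hSL
  set Q : Set (EuclideanSpace ℝ (Fin d)) := (fun u => u - v) ⁻¹' Q0 with hQ
  have hinner_cont : Continuous fun u : EuclideanSpace ℝ (Fin d) => ⟪u, v⟫ := continuous_id.inner continuous_const
  have hBmeas : MeasurableSet B := measurableSet_closedBall
  have hQ0meas : MeasurableSet Q0 :=
    hBmeas.inter ((isOpen_lt hinner_cont continuous_const).measurableSet)
  have hQmeas : MeasurableSet Q := hQ0meas.preimage (measurable_id.sub_const v)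
  -- pointwise facts
  have hnorm_le : ∀ {u : EuclideanSpace ℝ (Fin d)}, u ∈ B → ‖u‖ ≤ γ := fun hu => by
    rwa [hB, mem_closedBall, dist_zero_right] at hu
  have hPsub : P ⊆ closedBall v γ := by
    intro u hu
    obtain ⟨hu1, hu2⟩ := hu
    have h1 : ‖u‖ ≤ γ := hnorm_le hu1
    have h2 : c ≤ ⟪u, v⟫ := hu2
    rw [mem_closedBall, dist_eq_norm]
    have hsq : ‖u - v‖^2 ≤ γ^2 := by
      rw [norm_sub_sq_real]
      have : ‖v‖^2 = t^2 := by rw [ht]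
      nlinarith [norm_nonneg u]
    calc ‖u - v‖ = Real.sqrt (‖u - v‖^2) := (Real.sqrt_sq (norm_nonneg _)).symm
      _ ≤ Real.sqrt (γ^2) := Real.sqrt_le_sqrt hsq
      _ = γ := Real.sqrt_sq hγ.le
  have hQsubB : Q ⊆ B := by
    intro u hu
    obtain ⟨hu1, hu2⟩ := hu
    have h1 : ‖u - v‖ ≤ γ := hnorm_le hu1
    have h2 : ⟪u - v, v⟫ < -c := hu2
    rw [hB, mem_closedBall, dist_zero_right]
    have hsq : ‖u‖^2 ≤ γ^2 := by
      have : ‖u‖^2 = ‖(u - v) + v‖^2 := by rw [sub_add_cancel]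
      rw [this, norm_add_sq_real]
      nlinarith [norm_nonneg (u - v)]
    calc ‖u‖ = Real.sqrt (‖u‖^2) := (Real.sqrt_sq (norm_nonneg _)).symm
      _ ≤ Real.sqrt (γ^2) := Real.sqrt_le_sqrt hsq
      _ = γ := Real.sqrt_sq hγ.le
  have hQsubBv : Q ⊆ closedBall v γ := by
    intro u hu
    have h1 : ‖u - v‖ ≤ γ := hnorm_le hu.1
    rwa [mem_closedBall, dist_eq_norm]
  have hdisj : Disjoint P Q := by
    rw [Set.disjoint_left]
    intro u huP huQ
    have h1 : c ≤ ⟪u, v⟫ := huP.2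
    have h2 : ⟪u - v, v⟫ < -c := huQ.2
    rw [inner_sub_left] at h2
    have hvv : ⟪v, v⟫ = t^2 := by
      rw [real_inner_self_eq_norm_sq, ht]
    rw [hvv] at h2
    rw [hc] at h1 h2
    linarith
  -- volume identities
  have hvolQ : volume Q = volume Q0 := by
    rw [hQ]
    exact (measurePreserving_sub_right volume v).measure_preimage hQ0meas.nullMeasurableSet
  have hcover : B ⊆ P ∪ Q0 ∪ SL := by
    intro u hu
    rcases le_or_gt c ⟪u, v⟫ with h | h
    · exact Or.inl (Or.inl ⟨hu, h⟩)
    rcases lt_or_ge ⟪u, v⟫ (-c) with h' | h'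
    · exact Or.inl (Or.inr ⟨hu, h'⟩)
    · exact Or.inr ⟨hu, h', h⟩
  have hPQsub : P ∪ Q ⊆ B ∩ closedBall v γ := by
    intro u hu
    rcases hu with hu | hu
    · exact ⟨hu.1, hPsub hu⟩
    · exact ⟨hQsubB hu, hQsubBv hu⟩
  have hkey : volume B ≤ volume (B ∩ closedBall v γ) + volume SL := by
    calc volume B ≤ volume (P ∪ Q0 ∪ SL) := measure_mono hcover
      _ ≤ volume (P ∪ Q0) + volume SL := measure_union_le _ _
      _ ≤ (volume P + volume Q0) + volume SL := add_le_add_left (measure_union_le _ _) _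
      _ = (volume P + volume Q) + volume SL := by rw [hvolQ]
      _ = volume (P ∪ Q) + volume SL := by rw [measure_union hdisj hQmeas]
      _ ≤ volume (B ∩ closedBall v γ) + volume SL := add_le_add_left (measure_mono hPQsub) _
  have hfin : volume (B ∩ closedBall v γ) ≠ ∞ :=
    (lt_of_le_of_lt (measure_mono Set.inter_subset_left) measure_closedBall_lt_top).ne
  have hdiff_le : volume (B \ closedBall v γ) ≤ volume SL := by
    have hsplit : volume (B \ closedBall v γ) + volume (B ∩ closedBall v γ) = volume B := by
      rw [add_comm]
      exact measure_inter_add_diff B measurableSet_closedBall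
    have : volume (B \ closedBall v γ) + volume (B ∩ closedBall v γ)
        ≤ volume SL + volume (B ∩ closedBall v γ) := by
      rw [hsplit, add_comm (volume SL)]
      exact hkey
    exact (ENNReal.add_le_add_iff_right hfin).mp this
  -- rotate the slab
  set i0 : Fin d := ⟨0, hd⟩ with hi0
  have hon : Orthonormal ℝ (Set.restrict ({i0} : Set (Fin d)) (fun _ => e)) := by
    rw [orthonormal_iff_ite]
    intro i j
    have hij : i = j := Subtype.ext (i.2.trans j.2.symm)
    rw [if_pos hij]
    show ⟪e, e⟫ = (1:ℝ)
    rw [real_inner_self_eq_norm_sq, hnorme]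
    norm_num
  obtain ⟨b, hb⟩ := hon.exists_orthonormalBasis_extension_of_card_eq
    (by rw [finrank_euclideanSpace_fin, Fintype.card_fin])
  have hbi0 : b i0 = e := hb i0 rfl
  set Z : Set (EuclideanSpace ℝ (Fin d)) := {z | ‖z‖ ≤ γ ∧ |z i0| ≤ t/2} with hZ
  have hZmeas : MeasurableSet Z := by
    apply MeasurableSet.inter
    · exact (isClosed_le continuous_norm continuous_const).measurableSet
    · have hcont : Continuous fun z : EuclideanSpace ℝ (Fin d) => z i0 :=
        (continuous_apply i0).comp (PiLp.continuousLinearEquiv 2 ℝ _).continuous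
      exact (isClosed_le hcont.abs continuous_const).measurableSet
  have hSLsub : SL ⊆ ⇑b.repr ⁻¹' Z := by
    intro u hu
    obtain ⟨hu1, hu2, hu3⟩ := hu
    constructor
    · show ‖b.repr u‖ ≤ γ
      rw [LinearIsometryEquiv.norm_map]
      exact hnorm_le hu1
    · show |b.repr u i0| ≤ t/2
      have : b.repr u i0 = ⟪b i0, u⟫ := b.repr_apply_apply u i0
      rw [this, hbi0, he, real_inner_smul_left, real_inner_comm u v]
      have habs : |⟪u, v⟫| ≤ c := abs_le.mpr ⟨hu2, hu3.le⟩
      rw [abs_mul, abs_of_pos (inv_pos.mpr htpos)]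
      calc t⁻¹ * |⟪u, v⟫| ≤ t⁻¹ * c := by
            apply mul_le_mul_of_nonneg_left habs (by positivity)
        _ = t/2 := by rw [hc]; field_simp
  have hSLvol : volume SL ≤ volume Z := by
    calc volume SL ≤ volume (⇑b.repr ⁻¹' Z) := measure_mono hSLsub
      _ = volume Z := b.measurePreserving_repr.measure_preimage hZmeas.nullMeasurableSet
  -- conclude
  calc volume (B \ closedBall v γ) ≤ volume SL := hdiff_le
    _ ≤ volume Z := hSLvol
    _ ≤ ENNReal.ofReal (2*(t/2)) *
        ENNReal.ofReal (γ^(d-1) * (Real.sqrt π ^ (d-1) / Real.Gamma (((d:ℝ)-1)/2+1))) :=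
        slab_vol hd i0 hγ (by positivity)
    _ ≤ ENNReal.ofReal (2*(t/2)) * (ENNReal.ofReal (Real.sqrt d / (2*γ)) *
        volume (closedBall (0:EuclideanSpace ℝ (Fin d)) γ)) := mul_le_mul_right (vol_ball_ratio hd hγ) _
    _ = ENNReal.ofReal (Real.sqrt d * t / (2*γ)) * volume (closedBall (0:EuclideanSpace ℝ (Fin d)) γ) := by
        rw [← mul_assoc, ← ENNReal.ofReal_mul (by positivity)]
        congr 2
        field_simp
    _ = ENNReal.ofReal (Real.sqrt d * ‖v‖ / (2*γ)) * volume (closedBall (0:EuclideanSpace ℝ (Fin d)) γ) := by rw [← ht]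


/-- Directional derivative bound from the `ℓp`-Lipschitz hypothesis. -/
lemma fderiv_apply_bound {p : ℝ≥0∞} (hp : 1 ≤ p) {f : EuclideanSpace ℝ (Fin d) → ℝ} {M : ℝ}
    (hM : 0 ≤ M) (hlip : ∀ x y : EuclideanSpace ℝ (Fin d), |f y - f x| ≤ M * lpnorm p (y - x))
    (w v : EuclideanSpace ℝ (Fin d)) : |fderiv ℝ f w v| ≤ M * lpnorm p v := by
  by_cases hw : DifferentiableAt ℝ f w
  · have hline : HasDerivAt (fun r : ℝ => w + r • v) v 0 := by
      simpa using ((hasDerivAt_id (0:ℝ)).smul_const v).const_add w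
    have hfw : HasFDerivAt f (fderiv ℝ f w) (w + (0:ℝ) • v) := by
      simpa using hw.hasFDerivAt
    have hg : HasDerivAt (fun r : ℝ => f (w + r • v)) (fderiv ℝ f w v) 0 :=
      hfw.comp_hasDerivAt 0 hline
    have hLip : ∀ᶠ r in nhds (0:ℝ), ‖f (w + r • v) - f (w + (0:ℝ) • v)‖ ≤
        (M * lpnorm p v) * ‖r - 0‖ := by
      refine Filter.Eventually.of_forall fun r => ?_
      have h1 := hlip (w + (0:ℝ) • v) (w + r • v)
      have h2 : (w + r • v) - (w + (0:ℝ) • v) = r • v := by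
        module
      rw [h2] at h1
      rw [lpnorm_smul hp] at h1
      rw [Real.norm_eq_abs, Real.norm_eq_abs, sub_zero]
      calc |f (w + r • v) - f (w + (0:ℝ) • v)| ≤ M * (|r| * lpnorm p v) := h1
        _ = M * lpnorm p v * |r| := by ring
    have hb := hg.hasFDerivAt.le_of_lip' (mul_nonneg hM (lpnorm_nonneg p v)) hLip
    rw [ContinuousLinearMap.norm_toSpanSingleton] at hb
    have h1 : ‖(1 : ℝ →L[ℝ] ℝ)‖ = 1 := by
      rw [ContinuousLinearMap.one_def, ContinuousLinearMap.norm_id]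
    rw [Real.norm_eq_abs] at hb
    exact hb
  · rw [fderiv_zero_of_not_differentiableAt hw]
    simp only [ContinuousLinearMap.zero_apply, abs_zero]
    exact mul_nonneg hM (lpnorm_nonneg p v)

/-- The smoothed function has the expected derivative. -/
lemma smooth_hasFDerivAt {f : EuclideanSpace ℝ (Fin d) → ℝ} {L : ℝ≥0}
    (hlipE : LipschitzWith L f) {γ : ℝ} (hγ : 0 < γ) (x₀ : EuclideanSpace ℝ (Fin d)) :
    HasFDerivAt (smooth f γ)
      ((volume (closedBall (0:EuclideanSpace ℝ (Fin d)) γ)).toReal⁻¹ •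
        ∫ u in closedBall (0:EuclideanSpace ℝ (Fin d)) γ, fderiv ℝ f (x₀+u)) x₀ := by
  set B := closedBall (0:EuclideanSpace ℝ (Fin d)) γ with hB
  set μ := volume.restrict B with hμ
  haveI : IsFiniteMeasure μ := ⟨by
    rw [hμ, Measure.restrict_apply_univ]
    exact measure_closedBall_lt_top⟩
  have cont : Continuous f := hlipE.continuous
  have hmeas : ∀ᶠ x in nhds x₀, AEStronglyMeasurable (fun u => f (x + u)) μ :=
    Filter.Eventually.of_forall fun x =>
      (cont.comp (continuous_add_left x)).aestronglyMeasurable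
  have hint : Integrable (fun u => f (x₀ + u)) μ := by
    rw [hμ]
    exact (cont.comp (continuous_add_left x₀)).continuousOn.integrableOn_compact
      (isCompact_closedBall 0 γ)
  have hF'meas : AEStronglyMeasurable (fun u => fderiv ℝ f (x₀ + u)) μ :=
    ((measurable_fderiv ℝ f).comp (measurable_const_add x₀)).aestronglyMeasurable
  have hlipx : ∀ᵐ u ∂μ, LipschitzOnWith (Real.nnabs (L:ℝ)) (fun x => f (x + u)) (ball x₀ 1) := by
    refine MeasureTheory.ae_of_all _ fun u => ?_
    have : LipschitzWith L (fun x => f (x + u)) := by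
      have := hlipE.comp (IsometryEquiv.addRight u).isometry.lipschitz
      simpa [mul_one, Function.comp_def] using this
    have heq : Real.nnabs (L:ℝ) = L := by
      apply NNReal.coe_injective
      rw [Real.coe_nnabs, abs_of_nonneg L.coe_nonneg]
    rw [heq]
    exact this.lipschitzOnWith
  have hbint : Integrable (fun _ : EuclideanSpace ℝ (Fin d) => (L:ℝ)) μ := integrable_const _
  have hdiff : ∀ᵐ u ∂μ, HasFDerivAt (fun x => f (x + u)) (fderiv ℝ f (x₀ + u)) x₀ := by
    have h0 : ∀ᵐ z ∂(volume : Measure (EuclideanSpace ℝ (Fin d))), DifferentiableAt ℝ f z :=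
      hlipE.ae_differentiableAt
    have h1 : ∀ᵐ u ∂(volume : Measure (EuclideanSpace ℝ (Fin d))),
        DifferentiableAt ℝ f (x₀ + u) := by
      rw [MeasureTheory.ae_iff] at h0 ⊢
      have hpre : {u : EuclideanSpace ℝ (Fin d) | ¬ DifferentiableAt ℝ f (x₀ + u)}
          = (fun u => x₀ + u) ⁻¹' {z | DifferentiableAt ℝ f z}ᶜ := rfl
      rw [hpre, (measurePreserving_add_left volume x₀).measure_preimage
        ((measurableSet_of_differentiableAt ℝ f).compl.nullMeasurableSet)]
      exact h0
    have h2 := ae_restrict_of_ae (μ := volume) (s := B) h1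
    rw [← hμ] at h2
    filter_upwards [h2] with u hu
    have hcomp := hu.hasFDerivAt.comp x₀ ((hasFDerivAt_id x₀).add_const u)
    simpa [Function.comp_def] using hcomp
  have key := hasFDerivAt_integral_of_dominated_loc_of_lip (𝕜 := ℝ) (μ := μ)
    (F := fun x u => f (x + u)) (F' := fun u => fderiv ℝ f (x₀ + u)) (x₀ := x₀)
    (bound := fun _ => (L:ℝ)) (s := ball x₀ 1) (ball_mem_nhds x₀ one_pos) hmeas hint hF'meas hlipx hbint hdiff
  have hsm : smooth f γ = fun x => (volume B).toReal⁻¹ • ∫ u in B, f (x + u) := by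
    funext x
    rw [smooth, MeasureTheory.setAverage_eq]
    rfl
  rw [hsm]
  exact key.2.const_smul ((volume B).toReal⁻¹)



lemma lpnorm_zero {p : ℝ≥0∞} (hp : 1 ≤ p) :
    lpnorm p (0 : EuclideanSpace ℝ (Fin d)) = 0 := by
  haveI : Fact (1 ≤ p) := ⟨hp⟩
  have h0 : (WithLp.equiv p (Fin d → ℝ)).symm (WithLp.equiv 2 (Fin d → ℝ)
      (0 : EuclideanSpace ℝ (Fin d))) = (0 : WithLp p (Fin d → ℝ)) := by
    ext i
    rfl
  rw [lpnorm, h0, norm_zero]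

end SGL

theorem smoothing_gradient_lipschitz {d : ℕ} (p q : ℝ≥0∞)
    (hp1 : 1 ≤ p) (hp2 : p ≤ 2) (hq : 2 ≤ q) (hpq : 1 / p + 1 / q = 1)
    (f : EuclideanSpace ℝ (Fin d) → ℝ) (M : ℝ)
    (hconv : ConvexOn ℝ Set.univ f)
    (hlip : ∀ x y : EuclideanSpace ℝ (Fin d), |f y - f x| ≤ M * lpnorm p (y - x))
    {γ : ℝ} (hγ : 0 < γ) :
    ContDiff ℝ 1 (smooth f γ) ∧
      ∀ x y : EuclideanSpace ℝ (Fin d),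
        lpnorm q (gradient (smooth f γ) y - gradient (smooth f γ) x)
          ≤ (Real.sqrt d * M / γ) * lpnorm p (y - x) := by
  rcases Nat.eq_zero_or_pos d with hd0 | hd
  · -- degenerate dimension-zero case
    subst hd0
    haveI : Subsingleton (EuclideanSpace ℝ (Fin 0)) :=
      ⟨fun a b => PiLp.ext fun i => i.elim0⟩
    have hsm : smooth f γ = fun _ => smooth f γ 0 :=
      funext fun x => by rw [Subsingleton.elim x 0]
    constructor
    · rw [hsm]; exact contDiff_const
    · intro x y
      have hxy : y = x := Subsingleton.elim y x
      subst hxy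
      simp only [sub_self]
      rw [SGL.lpnorm_zero (le_trans (by norm_num) hq), SGL.lpnorm_zero hp1, mul_zero]
  · -- main case `1 ≤ d`
    set i0 : Fin d := ⟨0, hd⟩ with hi0
    have hM : 0 ≤ M := by
      have h := hlip 0 (EuclideanSpace.single i0 1)
      have h1 : lpnorm p (EuclideanSpace.single i0 1 - 0) = 1 := by
        rw [sub_zero, SGL.lpnorm_single hp1, abs_one]
      rw [h1, mul_one] at h
      exact (abs_nonneg _).trans h
    set C : ℝ := Real.sqrt d * M / γ with hC
    have hCnonneg : 0 ≤ C :=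
      div_nonneg (mul_nonneg (Real.sqrt_nonneg _) hM) hγ.le
    have hlipE : LipschitzWith (M * d).toNNReal f := by
      apply LipschitzWith.of_dist_le_mul
      intro a b
      rw [Real.dist_eq, Real.coe_toNNReal _ (by positivity)]
      calc |f a - f b| ≤ M * lpnorm p (a - b) := hlip b a
        _ ≤ M * ((d : ℝ) * ‖a - b‖) :=
            mul_le_mul_of_nonneg_left (SGL.lpnorm_le_card_mul_norm hp1 _) hM
        _ = M * d * dist a b := by rw [dist_eq_norm]; ring
    set B : Set (EuclideanSpace ℝ (Fin d)) := closedBall 0 γ with hB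
    set V : ℝ≥0∞ := volume B with hV
    have hVfin : V ≠ ∞ := measure_closedBall_lt_top.ne
    have hVtop : 0 < V.toReal :=
      ENNReal.toReal_pos (measure_closedBall_pos volume 0 hγ).ne' hVfin
    set D : EuclideanSpace ℝ (Fin d) → (EuclideanSpace ℝ (Fin d) →L[ℝ] ℝ) :=
      fun w => fderiv ℝ f w with hD
    have hDdir : ∀ w v, |D w v| ≤ M * lpnorm p v :=
      fun w v => SGL.fderiv_apply_bound hp1 hM hlip w v
    have hDmeas : Measurable D := measurable_fderiv ℝ f
    have hG : ∀ x, HasFDerivAt (smooth f γ) (V.toReal⁻¹ • ∫ u in B, D (x + u)) x :=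
      fun x => SGL.smooth_hasFDerivAt hlipE hγ x
    have hfd : ∀ x, fderiv ℝ (smooth f γ) x = V.toReal⁻¹ • ∫ u in B, D (x + u) :=
      fun x => (hG x).fderiv
    -- translation identity for scalar integrals
    have hBx : ∀ (x' : EuclideanSpace ℝ (Fin d)) (φ : EuclideanSpace ℝ (Fin d) → ℝ),
        ∫ u in B, φ (x' + u) = ∫ w in closedBall x' γ, φ w := by
      intro x' φ
      have hpre : (fun u => x' + u) ⁻¹' (closedBall x' γ) = B := by
        ext u
        simp only [Set.mem_preimage, mem_closedBall, dist_eq_norm, add_sub_cancel_left, hB,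
          sub_zero]
      calc ∫ u in B, φ (x' + u)
          = ∫ u in (fun u => x' + u) ⁻¹' (closedBall x' γ), φ (x' + u) := by rw [hpre]
        _ = ∫ w in closedBall x' γ, φ w :=
            (measurePreserving_add_left volume x').setIntegral_preimage_emb
              (MeasurableEquiv.addLeft x').measurableEmbedding φ _
    have hIntTrans : ∀ x' : EuclideanSpace ℝ (Fin d),
        Integrable (fun u => D (x' + u)) (volume.restrict B) := by
      intro x'
      refine Integrable.mono' (g := fun _ => M * d)
        ((integrableOn_const_iff).2 (Or.inr measure_closedBall_lt_top)) ?_ ?_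
      · exact ((hDmeas.comp (measurable_const_add x')).aestronglyMeasurable)
      · refine MeasureTheory.ae_of_all _ fun u => ?_
        refine ContinuousLinearMap.opNorm_le_bound _ (by positivity) fun v => ?_
        rw [Real.norm_eq_abs]
        calc |D (x' + u) v| ≤ M * lpnorm p v := hDdir _ v
          _ ≤ M * ((d : ℝ) * ‖v‖) :=
              mul_le_mul_of_nonneg_left (SGL.lpnorm_le_card_mul_norm hp1 _) hM
          _ = M * d * ‖v‖ := by ring
    -- the key pointwise bound on the difference of derivatives
    have KEY : ∀ x y v : EuclideanSpace ℝ (Fin d),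
        |(fderiv ℝ (smooth f γ) y - fderiv ℝ (smooth f γ) x) v|
          ≤ C * ‖y - x‖ * lpnorm p v := by
      intro x y v
      set φ : EuclideanSpace ℝ (Fin d) → ℝ := fun w => D w v with hφ
      have hφmeas : Measurable φ := measurable_fderiv_apply_const ℝ (f := f) (y := v)
      have hφbound : ∀ w, |φ w| ≤ M * lpnorm p v := fun w => hDdir w v
      have hKv : 0 ≤ M * lpnorm p v := mul_nonneg hM (SGL.lpnorm_nonneg p v)
      have hφint : ∀ S : Set (EuclideanSpace ℝ (Fin d)), volume S < ∞ →
          IntegrableOn φ S volume := by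
        intro S hS
        refine Integrable.mono' (g := fun _ => M * lpnorm p v)
          ((integrableOn_const_iff).2 (Or.inr hS)) hφmeas.aestronglyMeasurable ?_
        exact MeasureTheory.ae_of_all _ fun w => by
          rw [Real.norm_eq_abs]; exact hφbound w
      have happ : ∀ x' : EuclideanSpace ℝ (Fin d),
          (fderiv ℝ (smooth f γ) x') v = V.toReal⁻¹ * ∫ w in closedBall x' γ, φ w := by
        intro x'
        rw [hfd x', ContinuousLinearMap.smul_apply,
          ContinuousLinearMap.integral_apply (hIntTrans x'), smul_eq_mul]
        congr 1
        exact hBx x' φ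
      have hsplitX : ∀ x' y' : EuclideanSpace ℝ (Fin d),
          ∫ w in closedBall x' γ, φ w =
            (∫ w in closedBall x' γ \ closedBall y' γ, φ w)
              + ∫ w in closedBall x' γ ∩ closedBall y' γ, φ w := by
        intro x' y'
        rw [← MeasureTheory.setIntegral_union
          (Set.disjoint_left.mpr fun w hw1 hw2 => hw1.2 hw2.2)
          (measurableSet_closedBall.inter measurableSet_closedBall)
          (hφint _ ((measure_mono Set.diff_subset).trans_lt measure_closedBall_lt_top))
          (hφint _ ((measure_mono Set.inter_subset_left).trans_lt measure_closedBall_lt_top)),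
          Set.diff_union_inter]
      have hvol : ∀ x' y' : EuclideanSpace ℝ (Fin d),
          (volume (closedBall x' γ \ closedBall y' γ)).toReal
            ≤ Real.sqrt d * ‖y - x‖ / (2*γ) * V.toReal
            ∨ True := by exact fun _ _ => Or.inr trivial
      -- volume of the ball differences
      have hvol1 : ∀ x' y' : EuclideanSpace ℝ (Fin d),
          (volume (closedBall x' γ \ closedBall y' γ)).toReal
            ≤ Real.sqrt d * ‖y' - x'‖ / (2*γ) * V.toReal := by
        intro x' y'
        have hpre : closedBall x' γ \ closedBall y' γ
            = (fun u => u - x') ⁻¹' (B \ closedBall (y' - x') γ) := by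
          ext u
          simp only [Set.mem_preimage, Set.mem_diff, mem_closedBall, dist_eq_norm, hB, sub_zero]
          rw [sub_sub_sub_cancel_right]
        have hle : volume (closedBall x' γ \ closedBall y' γ)
            ≤ ENNReal.ofReal (Real.sqrt d * ‖y' - x'‖ / (2*γ)) * V := by
          rw [hpre, (measurePreserving_sub_right volume x').measure_preimage
            ((measurableSet_closedBall.diff measurableSet_closedBall).nullMeasurableSet)]
          exact SGL.diff_vol hd hγ (y' - x')
        have hfin2 : ENNReal.ofReal (Real.sqrt d * ‖y' - x'‖ / (2*γ)) * V ≠ ∞ :=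
          ENNReal.mul_ne_top ENNReal.ofReal_ne_top hVfin
        have := ENNReal.toReal_mono hfin2 hle
        rwa [ENNReal.toReal_mul, ENNReal.toReal_ofReal (by positivity)] at this
      -- assemble
      have hdiffint : (fderiv ℝ (smooth f γ) y) v - (fderiv ℝ (smooth f γ) x) v
          = V.toReal⁻¹ * ((∫ w in closedBall y γ \ closedBall x γ, φ w)
              - ∫ w in closedBall x γ \ closedBall y γ, φ w) := by
        rw [happ y, happ x, hsplitX y x, hsplitX x y,
          Set.inter_comm (closedBall y γ) (closedBall x γ)]
        ring
      have habs1 : |∫ w in closedBall y γ \ closedBall x γ, φ w|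
          ≤ (M * lpnorm p v) * (volume (closedBall y γ \ closedBall x γ)).toReal := by
        rw [← Real.norm_eq_abs]
        exact norm_setIntegral_le_of_norm_le_const
          ((measure_mono Set.diff_subset).trans_lt measure_closedBall_lt_top)
          (fun w _ => by rw [Real.norm_eq_abs]; exact hφbound w)
      have habs2 : |∫ w in closedBall x γ \ closedBall y γ, φ w|
          ≤ (M * lpnorm p v) * (volume (closedBall x γ \ closedBall y γ)).toReal := by
        rw [← Real.norm_eq_abs]
        exact norm_setIntegral_le_of_norm_le_const
          ((measure_mono Set.diff_subset).trans_lt measure_closedBall_lt_top)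
          (fun w _ => by rw [Real.norm_eq_abs]; exact hφbound w)
      have hnormrev : ‖x - y‖ = ‖y - x‖ := norm_sub_rev x y
      have hI1 : |∫ w in closedBall y γ \ closedBall x γ, φ w|
          ≤ (M * lpnorm p v) * (Real.sqrt d * ‖y - x‖ / (2*γ) * V.toReal) := by
        refine habs1.trans (mul_le_mul_of_nonneg_left ?_ hKv)
        have := hvol1 y x
        rwa [hnormrev] at this
      have hI2 : |∫ w in closedBall x γ \ closedBall y γ, φ w|
          ≤ (M * lpnorm p v) * (Real.sqrt d * ‖y - x‖ / (2*γ) * V.toReal) :=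
        habs2.trans (mul_le_mul_of_nonneg_left (hvol1 x y) hKv)
      rw [ContinuousLinearMap.sub_apply, hdiffint, abs_mul,
        abs_of_nonneg (inv_nonneg.2 hVtop.le)]
      have habs12 : |(∫ w in closedBall y γ \ closedBall x γ, φ w)
          - ∫ w in closedBall x γ \ closedBall y γ, φ w|
          ≤ |∫ w in closedBall y γ \ closedBall x γ, φ w|
            + |∫ w in closedBall x γ \ closedBall y γ, φ w| := by
        rw [sub_eq_add_neg]
        exact (abs_add_le _ _).trans (by rw [abs_neg])
      calc V.toReal⁻¹ * |(∫ w in closedBall y γ \ closedBall x γ, φ w)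
            - ∫ w in closedBall x γ \ closedBall y γ, φ w|
          ≤ V.toReal⁻¹ * (|∫ w in closedBall y γ \ closedBall x γ, φ w|
              + |∫ w in closedBall x γ \ closedBall y γ, φ w|) :=
            mul_le_mul_of_nonneg_left habs12 (inv_nonneg.2 hVtop.le)
        _ ≤ V.toReal⁻¹ * ((M * lpnorm p v) * (Real.sqrt d * ‖y - x‖ / (2*γ) * V.toReal)
              + (M * lpnorm p v) * (Real.sqrt d * ‖y - x‖ / (2*γ) * V.toReal)) :=
            mul_le_mul_of_nonneg_left (add_le_add hI1 hI2) (inv_nonneg.2 hVtop.le)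
        _ = C * ‖y - x‖ * lpnorm p v := by
            rw [hC]
            field_simp
            ring
    -- continuity of the derivative
    have hopLip : ∀ x y : EuclideanSpace ℝ (Fin d),
        ‖fderiv ℝ (smooth f γ) y - fderiv ℝ (smooth f γ) x‖ ≤ (C * d) * ‖y - x‖ := by
      intro x y
      refine ContinuousLinearMap.opNorm_le_bound _ (by positivity) fun v => ?_
      rw [Real.norm_eq_abs]
      calc |(fderiv ℝ (smooth f γ) y - fderiv ℝ (smooth f γ) x) v|
          ≤ C * ‖y - x‖ * lpnorm p v := KEY x y v
        _ ≤ C * ‖y - x‖ * ((d:ℝ) * ‖v‖) :=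
            mul_le_mul_of_nonneg_left (SGL.lpnorm_le_card_mul_norm hp1 _) (by positivity)
        _ = (C * d) * ‖y - x‖ * ‖v‖ := by ring
    have hcontfd : Continuous (fderiv ℝ (smooth f γ)) := by
      have : LipschitzWith (C * d).toNNReal (fderiv ℝ (smooth f γ)) := by
        apply LipschitzWith.of_dist_le_mul
        intro a b
        rw [dist_eq_norm, dist_eq_norm, Real.coe_toNNReal _ (by positivity)]
        exact hopLip b a
      exact this.continuous
    refine ⟨contDiff_one_iff_fderiv.2 ⟨fun x => (hG x).differentiableAt, hcontfd⟩, ?_⟩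
    intro x y
    have hgradeq : ∀ (x' v : EuclideanSpace ℝ (Fin d)),
        (inner ℝ (gradient (smooth f γ) x') v : ℝ) = (fderiv ℝ (smooth f γ) x') v :=
      fun x' v => InnerProductSpace.toDual_symm_apply
    have hdual : lpnorm q (gradient (smooth f γ) y - gradient (smooth f γ) x)
        ≤ C * ‖y - x‖ := by
      refine SGL.dual_bound hp1 hp2 hq hpq (by positivity) fun v => ?_
      rw [inner_sub_left, hgradeq, hgradeq, ← ContinuousLinearMap.sub_apply]
      calc |(fderiv ℝ (smooth f γ) y - fderiv ℝ (smooth f γ) x) v|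
          ≤ C * ‖y - x‖ * lpnorm p v := KEY x y v
        _ = (C * ‖y - x‖) * lpnorm p v := by ring
    calc lpnorm q (gradient (smooth f γ) y - gradient (smooth f γ) x)
        ≤ C * ‖y - x‖ := hdual
      _ ≤ C * lpnorm p (y - x) :=
          mul_le_mul_of_nonneg_left (SGL.l2_le_lpnorm hp1 hp2 _) hCnonneg
      _ = (Real.sqrt d * M / γ) * lpnorm p (y - x) := by rw [hC]
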